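/- arXiv:2104.12196 — 6 statements merged into one kernel-verified Lean document; each statement's English description precedes it below -/
import Mathlib

section
/- Let P and Q be nonzero polynomials with real coefficients all of which are algebraic over ℚ, defining the rational function g(s) = P(s)/Q(s). Let r be a rational number such that there do NOT exist an integer n with (r : ℚ) = n and a constant c ∈ ℝ for which s^n · g(s) = c for all real s > 0 with Q(s) ≠ 0 (i.e., r does not lie in the exceptional set E of integers n for which s^n g(s) is constant). Then for every transcendental real number t > 0, the number t^r · g(t) is transcendental over ℚ. (Here t^r is the real power rpow with exponent the real number r; note Q(t) ≠ 0 automatically since t is transcendental and Q is a nonzero polynomial with algebraic coefficients.) -/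
open Polynomial

noncomputable abbrev AuxK : IntermediateField ℚ ℝ := algebraicClosure ℚ ℝ

lemma aux_trans {x : ℝ} (hx : Transcendental ℚ x) : Transcendental AuxK x := by
  intro h
  haveI : Algebra.IsIntegral ℚ AuxK := by
    haveI : Algebra.IsAlgebraic ℚ AuxK :=
      algebraicClosure.isAlgebraic ℚ ℝ
    infer_instance
  exact hx (isIntegral_trans (A := AuxK) x h.isIntegral).isAlgebraic

lemma aux_vanish {x : ℝ} (hx : Transcendental ℚ x) {F : Polynomial AuxK}
    (hF : Polynomial.aeval x F = 0) : F = 0 := by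
  by_contra h
  exact aux_trans hx ⟨F, h, hF⟩

lemma aux_lift (P : Polynomial ℝ) (h : ∀ i, IsAlgebraic ℚ (P.coeff i)) :
    ∃ P' : Polynomial AuxK, P'.map (algebraMap AuxK ℝ) = P := by
  refine ⟨∑ i ∈ P.support, Polynomial.C
    (⟨P.coeff i, mem_algebraicClosure_iff.mpr (h i)⟩ : AuxK) * Polynomial.X ^ i, ?_⟩
  rw [Polynomial.map_sum]
  conv_rhs => rw [P.as_sum_support]
  refine Finset.sum_congr rfl fun i _ => ?_
  simp [Polynomial.C_mul_X_pow_eq_monomial]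



/-- The paper's transcendence criterion: let `g(s) = P(s)/Q(s)` be a rational function
with algebraic coefficients (`P, Q` nonzero), and let `r` be a rational number not in
the exceptional set `E` of integers `n` for which `s^n g(s)` is constant. Then for
every transcendental real `t > 0`, the number `t^r · g(t)` is transcendental. -/
theorem transcendence_criterion (P Q : Polynomial ℝ)
    (hP : P ≠ 0) (hQ : Q ≠ 0)
    (hPalg : ∀ i : ℕ, IsAlgebraic ℚ (P.coeff i))
    (hQalg : ∀ i : ℕ, IsAlgebraic ℚ (Q.coeff i))
    (r : ℚ)
    (hr : ¬ ∃ (n : ℤ) (c : ℝ), r = (n : ℚ) ∧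
      ∀ s : ℝ, 0 < s → Q.eval s ≠ 0 → s ^ n * (P.eval s / Q.eval s) = c)
    (t : ℝ) (ht0 : 0 < t) (ht : Transcendental ℚ t) :
    Transcendental ℚ (Real.rpow t (r : ℝ) * (P.eval t / Q.eval t)) := by
  intro hα
  set α : ℝ := Real.rpow t (r : ℝ) * (P.eval t / Q.eval t) with hα_def
  obtain ⟨P', hP'⟩ := aux_lift P hPalg
  obtain ⟨Q', hQ'⟩ := aux_lift Q hQalg
  have hP'0 : P' ≠ 0 := by rintro rfl; rw [Polynomial.map_zero] at hP'; exact hP hP'.symm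
  have hQ'0 : Q' ≠ 0 := by rintro rfl; rw [Polynomial.map_zero] at hQ'; exact hQ hQ'.symm
  set b : ℕ := r.den with hb_def
  set a : ℤ := r.num with ha_def
  have hbpos : 0 < b := r.pos
  set u : ℝ := t ^ ((b : ℝ)⁻¹) with hu_def
  have hu0 : 0 < u := Real.rpow_pos_of_pos ht0 _
  have hub : u ^ b = t := by
    rw [hu_def, ← Real.rpow_natCast (t ^ ((b : ℝ)⁻¹)) b, ← Real.rpow_mul ht0.le,
      inv_mul_cancel₀ (by exact_mod_cast hbpos.ne'), Real.rpow_one]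
  have hu_trans : Transcendental ℚ u := by
    intro h
    apply ht
    rw [← hub]
    exact mem_algebraicClosure_iff.mp (pow_mem (mem_algebraicClosure_iff.mpr h) b)
  have hQt : Polynomial.eval t Q ≠ 0 := by
    intro h0
    apply hQ'0
    apply aux_vanish ht
    rw [Polynomial.aeval_def, ← Polynomial.eval_map, hQ']
    exact h0
  have htr : Real.rpow t (r : ℝ) = u ^ a := by
    have h1 : (r : ℝ) = (b : ℝ)⁻¹ * (a : ℝ) := by
      rw [Rat.cast_def, ← ha_def, ← hb_def, div_eq_mul_inv, mul_comm]
    show t ^ (r : ℝ) = u ^ a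
    rw [h1, Real.rpow_mul ht0.le, ← hu_def, ← Real.rpow_intCast]
  set cK : AuxK := ⟨α, mem_algebraicClosure_iff.mpr hα⟩ with hcK_def
  have hcKα : (algebraMap AuxK ℝ) cK = α := rfl
  have heq : u ^ a * Polynomial.eval t P = α * Polynomial.eval t Q := by
    rw [hα_def, htr]
    field_simp
  have hPu : Polynomial.aeval (u ^ b) P' = Polynomial.eval t P := by
    rw [hub, Polynomial.aeval_def, ← Polynomial.eval_map, hP']
  have hQu : Polynomial.aeval (u ^ b) Q' = Polynomial.eval t Q := by
    rw [hub, Polynomial.aeval_def, ← Polynomial.eval_map, hQ']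
  rcases le_or_gt 0 a with ha | ha
  · -- nonnegative exponent case
    set a' : ℕ := a.toNat with ha'_def
    have haa : (a' : ℤ) = a := Int.toNat_of_nonneg ha
    have heq' : u ^ a' * Polynomial.eval t P = α * Polynomial.eval t Q := by
      rw [← heq, ← haa, zpow_natCast]
    have hF : Polynomial.aeval u ((Polynomial.X : Polynomial AuxK) ^ a' *
        Polynomial.expand AuxK b P' - Polynomial.C cK * Polynomial.expand AuxK b Q') = 0 := by
      rw [map_sub, map_mul, map_mul, map_pow, Polynomial.aeval_X, Polynomial.aeval_C,
        Polynomial.expand_aeval, Polynomial.expand_aeval, hPu, hQu, hcKα, heq', sub_self]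
    have hEq1 : (Polynomial.X : Polynomial AuxK) ^ a' * Polynomial.expand AuxK b P' =
        Polynomial.C cK * Polynomial.expand AuxK b Q' :=
      sub_eq_zero.mp (aux_vanish hu_trans hF)
    by_cases hb1 : b = 1
    · apply hr
      refine ⟨a, α, ?_, ?_⟩
      · rw [← Rat.num_div_den r, ← ha_def, ← hb_def, hb1]; push_cast; ring
      · intro s hs hQs
        have hmap : (Polynomial.X : Polynomial ℝ) ^ a' * P = Polynomial.C α * Q := by
          have h2 := congrArg (Polynomial.map (algebraMap AuxK ℝ)) hEq1
          rwa [Polynomial.map_mul, Polynomial.map_mul, Polynomial.map_pow, Polynomial.map_X,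
            Polynomial.map_C, hcKα, hb1, Polynomial.expand_one, Polynomial.expand_one,
            hP', hQ'] at h2
        have h3 := congrArg (Polynomial.eval s) hmap
        rw [Polynomial.eval_mul, Polynomial.eval_mul, Polynomial.eval_pow, Polynomial.eval_X,
          Polynomial.eval_C] at h3
        rw [← haa, zpow_natCast]
        field_simp
        linarith [h3]
    · exfalso
      have hnd : ¬ (b ∣ a') := by
        intro hdvd
        have ha'abs : a' = a.natAbs := by
          have := Int.natAbs_of_nonneg ha
          omega
        exact hb1 (Nat.Coprime.eq_one_of_dvd r.reduced.symm (ha'abs ▸ hdvd))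
      obtain ⟨k, hk⟩ : ∃ k, P'.coeff k ≠ 0 := by
        by_contra hcon; push_neg at hcon
        exact hP'0 (Polynomial.ext fun n => by simp [hcon n])
      have h4 := congrArg (fun f => Polynomial.coeff f (k * b + a')) hEq1
      simp only [Polynomial.coeff_X_pow_mul, Polynomial.coeff_C_mul] at h4
      rw [Polynomial.coeff_expand_mul hbpos, Polynomial.coeff_expand hbpos,
        if_neg (by intro hd; exact hnd ((Nat.dvd_add_right ⟨k, rfl⟩).mp (by rwa [mul_comm k b] at hd)))] at h4
      simp at h4
      exact hk h4
  · -- negative exponent case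
    set na : ℕ := a.natAbs with hna_def
    have hna : (na : ℤ) = -a := Int.ofNat_natAbs_of_nonpos ha.le
    have hinv : u ^ a = (u ^ na)⁻¹ := by
      rw [show a = -(na : ℤ) by omega, zpow_neg, zpow_natCast]
    have heq' : Polynomial.eval t P = α * (u ^ na * Polynomial.eval t Q) := by
      rw [hinv] at heq
      field_simp at heq
      linarith [heq]
    have hF : Polynomial.aeval u (Polynomial.expand AuxK b P' -
        Polynomial.C cK * ((Polynomial.X : Polynomial AuxK) ^ na *
          Polynomial.expand AuxK b Q')) = 0 := by
      rw [map_sub, map_mul, map_mul, map_pow, Polynomial.aeval_X, Polynomial.aeval_C,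
        Polynomial.expand_aeval, Polynomial.expand_aeval, hPu, hQu, hcKα, ← heq', sub_self]
    have hEq1 : Polynomial.expand AuxK b P' =
        Polynomial.C cK * ((Polynomial.X : Polynomial AuxK) ^ na *
          Polynomial.expand AuxK b Q') :=
      sub_eq_zero.mp (aux_vanish hu_trans hF)
    by_cases hb1 : b = 1
    · apply hr
      refine ⟨a, α, ?_, ?_⟩
      · rw [← Rat.num_div_den r, ← ha_def, ← hb_def, hb1]; push_cast; ring
      · intro s hs hQs
        have hmap : P = Polynomial.C α * ((Polynomial.X : Polynomial ℝ) ^ na * Q) := by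
          have h2 := congrArg (Polynomial.map (algebraMap AuxK ℝ)) hEq1
          rwa [Polynomial.map_mul, Polynomial.map_mul, Polynomial.map_pow, Polynomial.map_X,
            Polynomial.map_C, hcKα, hb1, Polynomial.expand_one, Polynomial.expand_one,
            hP', hQ'] at h2
        have h3 := congrArg (Polynomial.eval s) hmap
        rw [Polynomial.eval_mul, Polynomial.eval_mul, Polynomial.eval_pow, Polynomial.eval_X,
          Polynomial.eval_C] at h3
        have hsa : s ^ a = (s ^ na)⁻¹ := by
          rw [show a = -(na : ℤ) by omega, zpow_neg, zpow_natCast]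
        rw [hsa]
        have hsna : (0:ℝ) < s ^ na := pow_pos hs na
        field_simp
        linarith [h3]
    · exfalso
      have hnd : ¬ (b ∣ na) := by
        intro hdvd
        exact hb1 (Nat.Coprime.eq_one_of_dvd r.reduced.symm hdvd)
      obtain ⟨k, hk⟩ : ∃ k, Q'.coeff k ≠ 0 := by
        by_contra hcon; push_neg at hcon
        exact hQ'0 (Polynomial.ext fun n => by simp [hcon n])
      have h4 := congrArg (fun f => Polynomial.coeff f (k * b + na)) hEq1
      simp only [Polynomial.coeff_C_mul, Polynomial.coeff_X_pow_mul] at h4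
      rw [Polynomial.coeff_expand_mul hbpos, Polynomial.coeff_expand hbpos,
        if_neg (by intro hd; exact hnd ((Nat.dvd_add_right ⟨k, rfl⟩).mp (by rwa [mul_comm k b] at hd)))] at h4
      have hck0 : cK = 0 := by
        rcases mul_eq_zero.mp h4.symm with h | h
        · exact h
        · exact absurd h hk
      rw [hck0, map_zero, zero_mul] at hEq1
      exact hP'0 ((Polynomial.expand_eq_zero hbpos).mp hEq1)
end

section
/- Let u : ℕ → ℚ be any sequence and let H be the formal power series H(X) = Σ_{n=0}^∞ (u_n / n!) Xⁿ over ℚ. Let G be the formal power series obtained by substituting X · exp(−X) into H, where exp(−X) = Σ_{k=0}^∞ (−1)ᵏ Xᵏ / k! is the formal exponential series evaluated at −X (note X · exp(−X) has zero constant term, so the substitution is well defined). Write G(X) = Σ_{k=0}^∞ (v_k / k!) Xᵏ, i.e., v_k = k! · (coefficient of Xᵏ in G). Then v_0 = u_0 and, for every n ≥ 1, v_n = Σ_{m=1}^n C(n, m) · (−m)^{n−m} · u_m, where C(n, m) is the binomial coefficient. -/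
open PowerSeries

lemma key_coeff (m k : ℕ) (h : m ≤ k) :
    PowerSeries.coeff k ((PowerSeries.X * PowerSeries.rescale (-1 : ℚ) (PowerSeries.exp ℚ)) ^ m)
      = (-(m : ℚ)) ^ (k - m) / ((k - m).factorial : ℚ) := by
  rw [mul_pow, ← map_pow, exp_pow_eq_rescale_exp, coeff_X_pow_mul', if_pos h,
    coeff_rescale, coeff_rescale, coeff_exp]
  field_simp
  rw [← neg_pow]
  rw [Algebra.algebraMap_self, RingHom.id_apply, mul_one_div, mul_div_assoc,
    div_self (Nat.cast_ne_zero.mpr (k - m).factorial_ne_zero), mul_one]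

/-- Let `H(X) = Σ (u_n/n!) Xⁿ` be a formal power series over `ℚ` and let `G` be the
series obtained by substituting `X·exp(−X)` into `H`.  Since `X·exp(−X)` has zero
constant term, `(X·exp(−X))^n` has order at least `n`, so the `k`-th coefficient of
`G` is the (finite) sum `Σ_{n≤k} (u_n/n!)·coeff_k((X·exp(−X))^n)`; this is how `G`
is characterized below.  Writing `v_k = k!·coeff_k G`, we have `v_0 = u_0` and, for
`n ≥ 1`, `v_n = Σ_{m=1}^n C(n,m) (−m)^{n−m} u_m`. -/
theorem associated_series_coeff (u : ℕ → ℚ) (G : PowerSeries ℚ)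
    (hG : ∀ k : ℕ, PowerSeries.coeff k G =
      ∑ n ∈ Finset.range (k + 1), (u n / (n.factorial : ℚ)) *
        PowerSeries.coeff k
          ((PowerSeries.X * PowerSeries.rescale (-1 : ℚ) (PowerSeries.exp ℚ)) ^ n)) :
    ((0 : ℕ).factorial : ℚ) * PowerSeries.coeff 0 G = u 0 ∧
    ∀ n : ℕ, 1 ≤ n →
      (n.factorial : ℚ) * PowerSeries.coeff n G =
        ∑ m ∈ Finset.Icc 1 n, (n.choose m : ℚ) * (-(m : ℚ)) ^ (n - m) * u m := by
  constructor
  · simp [hG 0, key_coeff 0 0 le_rfl]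
  · intro n hn
    rw [hG n, Finset.mul_sum]
    have hsplit : Finset.range (n + 1) = insert 0 (Finset.Icc 1 n) := by
      ext x
      simp [Finset.mem_range, Finset.mem_Icc, Nat.lt_succ_iff]
      omega
    rw [hsplit, Finset.sum_insert (by simp)]
    have hz : (n.factorial : ℚ) * ((u 0 / ((0:ℕ).factorial : ℚ)) *
        PowerSeries.coeff n
          ((PowerSeries.X * PowerSeries.rescale (-1 : ℚ) (PowerSeries.exp ℚ)) ^ 0)) = 0 := by
      rw [key_coeff 0 n (Nat.zero_le _)]
      rw [Nat.cast_zero, neg_zero, zero_pow (by omega : n - 0 ≠ 0)]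
      ring
    rw [hz, zero_add]
    apply Finset.sum_congr rfl
    intro m hm
    obtain ⟨hm1, hm2⟩ := Finset.mem_Icc.mp hm
    rw [key_coeff m n hm2, Nat.cast_choose ℚ hm2]
    have h1 : (m.factorial : ℚ) ≠ 0 := Nat.cast_ne_zero.mpr m.factorial_ne_zero
    have h2 : ((n - m).factorial : ℚ) ≠ 0 := Nat.cast_ne_zero.mpr (n - m).factorial_ne_zero
    field_simp
end

section
/- Let R be a commutative ring and let u, v : ℕ → R be sequences with u_0 = v_0. Then the following are equivalent: (i) for every n ≥ 1, u_n = Σ_{m=1}^n C(n−1, m−1) · n^{n−m} · v_m; (ii) for every n ≥ 1, v_n = Σ_{m=1}^n C(n, m) · (−m)^{n−m} · u_m. (Here C(a, b) denotes the binomial coefficient and the integer coefficients act on R via the canonical map ℤ → R.) -/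
open Finset Polynomial fwdDiff


lemma aux_XC : ((X + 1 : Polynomial ℤ)).natDegree = 1 := by
  simpa using Polynomial.natDegree_X_add_C (1 : ℤ)

lemma fwdDiff_eval (p : Polynomial ℤ) :
    fwdDiff (1:ℕ) (fun x : ℕ ↦ p.eval (x : ℤ)) = fun x : ℕ ↦ (p.comp (X + 1) - p).eval (x : ℤ) := by
  ext x
  simp [fwdDiff, eval_comp]

lemma fwdDiff_iter_eval_eq_zero (n : ℕ) : ∀ p : Polynomial ℤ, p.natDegree < n →
    (fwdDiff (1:ℕ))^[n] (fun x : ℕ ↦ p.eval (x : ℤ)) = fun _ ↦ 0 := by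
  induction n with
  | zero => omega
  | succ n IH =>
    intro p hp
    rw [Function.iterate_succ_apply, fwdDiff_eval]
    rcases Nat.eq_zero_or_pos p.natDegree with h0 | h1
    · obtain ⟨a, rfl⟩ := Polynomial.natDegree_eq_zero.mp h0
      simp only [Polynomial.C_comp, sub_self, Polynomial.eval_zero]
      exact Function.iterate_fixed (by simp [fwdDiff_const]) n
    · have hp0 : p ≠ 0 := fun hh => by simp [hh] at h1
      have hc0 : p.comp (X + 1) ≠ 0 := by
        intro hh
        have := Polynomial.natDegree_comp (p := p) (q := X + 1)
        rw [hh] at this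
        simp [aux_XC] at this
        omega
      have hdn : (p.comp (X + 1)).natDegree = p.natDegree := by
        rw [Polynomial.natDegree_comp, aux_XC, mul_one]
      set q := p.comp (X + 1) - p with hq
      have hdq : q.natDegree < n := by
        rcases eq_or_ne q 0 with h | h
        · rw [h]; simpa using (by omega : 0 < n)
        · have hdc : (p.comp (X + 1)).degree = p.degree := by
            rw [Polynomial.degree_eq_natDegree hc0, Polynomial.degree_eq_natDegree hp0, hdn]
          have hlc : (p.comp (X + 1)).leadingCoeff = p.leadingCoeff := by
            rw [Polynomial.leadingCoeff_comp (by rw [aux_XC]; norm_num)]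
            have : (X + 1 : Polynomial ℤ).leadingCoeff = 1 := by
              simpa using Polynomial.leadingCoeff_X_add_C (1 : ℤ)
            rw [this, one_pow, mul_one]
          have hlt := Polynomial.degree_sub_lt hdc hc0 hlc
          have := Polynomial.natDegree_lt_natDegree h (hq ▸ hlt)
          omega
      exact IH q hdq

lemma alt_sum_eval (n : ℕ) (p : Polynomial ℤ) (hp : p.natDegree < n) :
    ∑ m ∈ range (n + 1), (-1 : ℤ) ^ (n - m) * (n.choose m : ℤ) * p.eval (m : ℤ) = 0 := by
  have h := fwdDiff_iter_eq_sum_shift (1 : ℕ) (fun x : ℕ ↦ p.eval (x : ℤ)) n 0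
  rw [fwdDiff_iter_eval_eq_zero n p hp] at h
  simp only [smul_eq_mul, zero_add, smul_eq_mul, mul_one] at h
  rw [← h]

lemma delta_sum (k n : ℕ) (hk : 1 ≤ k) (hkn : k ≤ n) :
    ∑ m ∈ Icc k n, ((n.choose m : ℤ) * (-(m:ℤ))^(n-m)) * (((m-1).choose (k-1) : ℤ) * (m:ℤ)^(m-k))
      = if n = k then 1 else 0 := by
  rcases eq_or_lt_of_le hkn with rfl | hlt
  · simp
  · rw [if_neg (by omega)]
    set p : Polynomial ℤ := ((descPochhammer ℤ (k-1)).comp (X - 1)) * X^(n-k) with hp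
    have hcompdeg : ((descPochhammer ℤ (k-1)).comp (X - 1)).natDegree = k - 1 := by
      have : (X - 1 : Polynomial ℤ).natDegree = 1 := by
        simpa using (Polynomial.natDegree_X_sub_C (1 : ℤ))
      rw [Polynomial.natDegree_comp, descPochhammer_natDegree, this, mul_one]
    have hpd : p.natDegree = n - 1 := by
      rw [hp, Polynomial.natDegree_mul, hcompdeg, Polynomial.natDegree_X_pow]
      · omega
      · intro hh
        have := hcompdeg
        rw [hh] at this
        have h2 : (descPochhammer ℤ (k-1)).comp (X - 1) ≠ 0 := by
          intro h3
          have := congrArg (Polynomial.eval ((k:ℤ))) h3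
          rw [Polynomial.eval_comp] at this
          simp at this
          rw [show ((k:ℤ) - 1) = ((k-1 : ℕ) : ℤ) by push_cast; omega,
            descPochhammer_eval_eq_descFactorial] at this
          simp [Nat.descFactorial_self] at this
          exact Nat.factorial_ne_zero _ this
        exact h2 hh
      · exact pow_ne_zero _ Polynomial.X_ne_zero
    have heval : ∀ m : ℕ, 1 ≤ m → p.eval (m : ℤ) =
        ((k-1).factorial : ℤ) * ((m-1).choose (k-1) : ℤ) * (m:ℤ)^(n-k) := by
      intro m hm
      rw [hp, Polynomial.eval_mul, Polynomial.eval_comp]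
      simp only [Polynomial.eval_sub, Polynomial.eval_X, Polynomial.eval_one, Polynomial.eval_pow]
      rw [show ((m:ℤ) - 1) = ((m-1 : ℕ) : ℤ) by push_cast; omega,
        descPochhammer_eval_eq_descFactorial, Nat.descFactorial_eq_factorial_mul_choose]
      push_cast
      ring
    have h0 := alt_sum_eval n p (by omega)
    have hsub : ∑ m ∈ Icc k n, (-1 : ℤ) ^ (n - m) * (n.choose m : ℤ) * p.eval (m : ℤ) = 0 := by
      rw [Finset.sum_subset (fun x hx => by simp at hx ⊢; omega :
        Icc k n ⊆ range (n+1)) ?_, h0]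
      intro m hm hm'
      simp only [Finset.mem_range] at hm
      simp only [Finset.mem_Icc, not_and, not_le] at hm'
      have hmk : m < k := by omega
      rcases Nat.eq_zero_or_pos m with rfl | hm1
      · rw [hp]; simp [zero_pow (by omega : n - k ≠ 0)]
      · rw [heval m hm1, Nat.choose_eq_zero_of_lt (by omega : m - 1 < k - 1)]
        simp
    have hfac : ((k-1).factorial : ℤ) *
        (∑ m ∈ Icc k n, ((n.choose m : ℤ) * (-(m:ℤ))^(n-m)) *
          (((m-1).choose (k-1) : ℤ) * (m:ℤ)^(m-k))) = 0 := by
      rw [Finset.mul_sum, ← hsub]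
      apply Finset.sum_congr rfl
      intro m hm
      simp only [Finset.mem_Icc] at hm
      rw [heval m (by omega)]
      have hexp : n - k = (n - m) + (m - k) := by omega
      rw [hexp, pow_add, neg_pow (m:ℤ) (n-m)]
      push_cast
      ring
    have := mul_eq_zero.mp hfac
    rcases this with h | h
    · exact absurd h (by exact_mod_cast Nat.factorial_ne_zero _)
    · exact h

lemma subst_lemma {R : Type*} [CommRing R] (v : ℕ → R) (n : ℕ) (hn : 1 ≤ n) :
    ∑ m ∈ Icc 1 n, (((n.choose m : ℤ) * (-(m : ℤ)) ^ (n - m) : ℤ) : R) *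
      (∑ k ∈ Icc 1 m, ((((m - 1).choose (k - 1) : ℤ) * (m : ℤ) ^ (m - k) : ℤ) : R) * v k)
      = v n := by
  have hswap :
      ∑ m ∈ Icc 1 n, ∑ k ∈ Icc 1 m,
          ((((n.choose m : ℤ) * (-(m : ℤ)) ^ (n - m)) *
            (((m - 1).choose (k - 1) : ℤ) * (m : ℤ) ^ (m - k)) : ℤ) : R) * v k
        = ∑ k ∈ Icc 1 n, ∑ m ∈ Icc k n,
          ((((n.choose m : ℤ) * (-(m : ℤ)) ^ (n - m)) *
            (((m - 1).choose (k - 1) : ℤ) * (m : ℤ) ^ (m - k)) : ℤ) : R) * v k :=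
    Finset.sum_comm' (by intro m k; simp only [Finset.mem_Icc]; omega)
  calc ∑ m ∈ Icc 1 n, (((n.choose m : ℤ) * (-(m : ℤ)) ^ (n - m) : ℤ) : R) *
      (∑ k ∈ Icc 1 m, ((((m - 1).choose (k - 1) : ℤ) * (m : ℤ) ^ (m - k) : ℤ) : R) * v k)
      = ∑ m ∈ Icc 1 n, ∑ k ∈ Icc 1 m,
          ((((n.choose m : ℤ) * (-(m : ℤ)) ^ (n - m)) *
            (((m - 1).choose (k - 1) : ℤ) * (m : ℤ) ^ (m - k)) : ℤ) : R) * v k := by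
        apply Finset.sum_congr rfl
        intro m _
        rw [Finset.mul_sum]
        apply Finset.sum_congr rfl
        intro k _
        push_cast
        ring
    _ = ∑ k ∈ Icc 1 n, ∑ m ∈ Icc k n,
          ((((n.choose m : ℤ) * (-(m : ℤ)) ^ (n - m)) *
            (((m - 1).choose (k - 1) : ℤ) * (m : ℤ) ^ (m - k)) : ℤ) : R) * v k := hswap
    _ = ∑ k ∈ Icc 1 n, (((if n = k then 1 else 0 : ℤ) : R)) * v k := by
        apply Finset.sum_congr rfl
        intro k hk
        simp only [Finset.mem_Icc] at hk
        rw [← Finset.sum_mul, ← Int.cast_sum, delta_sum k n hk.1 hk.2]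
    _ = v n := by
        rw [Finset.sum_eq_single n]
        · simp
        · intro k hk hkn
          rw [if_neg (fun h => hkn h.symm)]
          simp
        · intro h
          simp only [Finset.mem_Icc] at h
          omega


/-- Inversion between the coefficients of `H(x) = Σ uₙ xⁿ/n!` and of its associated
series `G(t) = H(t e^{−t}) = Σ vₖ tᵏ/k!`: given `u₀ = v₀`, the relation
`uₙ = Σ_{m=1}^n C(n−1,m−1) n^{n−m} vₘ` (for all `n ≥ 1`) holds iff
`vₙ = Σ_{m=1}^n C(n,m) (−m)^{n−m} uₘ` (for all `n ≥ 1`). -/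
theorem coeff_inversion {R : Type*} [CommRing R] (u v : ℕ → R) (h0 : u 0 = v 0) :
    (∀ n : ℕ, 1 ≤ n →
        u n = ∑ m ∈ Finset.Icc 1 n,
          ((((n - 1).choose (m - 1) : ℤ) * (n : ℤ) ^ (n - m) : ℤ) : R) * v m) ↔
    (∀ n : ℕ, 1 ≤ n →
        v n = ∑ m ∈ Finset.Icc 1 n,
          (((n.choose m : ℤ) * (-(m : ℤ)) ^ (n - m) : ℤ) : R) * u m) := by
  constructor
  · intro h1 n hn
    have h := subst_lemma v n hn
    rw [← h]
    apply Finset.sum_congr rfl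
    intro m hm
    rw [h1 m (Finset.mem_Icc.mp hm).1]
  · intro h2 n
    induction n using Nat.strong_induction_on with
    | _ n IH =>
      intro hn
      set w : ℕ → R := fun m => ∑ k ∈ Icc 1 m,
        ((((m - 1).choose (k - 1) : ℤ) * (m : ℤ) ^ (m - k) : ℤ) : R) * v k with hwdef
      show u n = w n
      have hw : ∑ m ∈ Icc 1 n,
          (((n.choose m : ℤ) * (-(m : ℤ)) ^ (n - m) : ℤ) : R) * w m = v n := subst_lemma v n hn
      have hu : ∑ m ∈ Icc 1 n,
          (((n.choose m : ℤ) * (-(m : ℤ)) ^ (n - m) : ℤ) : R) * u m = v n := (h2 n hn).symm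
      have key : ∑ m ∈ Icc 1 n,
          ((((n.choose m : ℤ) * (-(m : ℤ)) ^ (n - m) : ℤ) : R) * u m -
           (((n.choose m : ℤ) * (-(m : ℤ)) ^ (n - m) : ℤ) : R) * w m) = 0 := by
        rw [Finset.sum_sub_distrib, hu, hw, sub_self]
      rw [Finset.sum_eq_single n ?_ ?_] at key
      · have hann : (((n.choose n : ℤ) * (-(n : ℤ)) ^ (n - n) : ℤ) : R) = 1 := by
          simp
        rw [hann, one_mul, one_mul] at key
        linear_combination key
      · intro m hm hmn
        simp only [Finset.mem_Icc] at hm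
        rw [IH m (by omega) (by omega), sub_self]
      · intro h
        simp only [Finset.mem_Icc] at h
        omega
end

section
/- Let k be an integer, let y be a real number with y > 0, and for x ∈ (0, 1/e) define f_k(x) = x^y · Σ_{n=0}^∞ (y + n)^{n−k} · xⁿ / n! (where x^y is the real power rpow and (y+n)^{n−k} is the integer power zpow with exponent n − k ∈ ℤ). Then for every x ∈ (0, 1/e), the function f_{k+1} is differentiable at x with derivative f_k(x) / x; equivalently, x · f_{k+1}′(x) = f_k(x). -/
open Set

set_option maxHeartbeats 1000000 in
/-- Summability of the coefficient bound `|(y+n)^(n+m)| * (n * r^(n-1)) / n!` for `0 < r < 1/e`. -/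
lemma kolberg_aux_summable (m : ℤ) (y r : ℝ) (hy : 0 < y) (hr0 : 0 < r)
    (hre : r < 1 / Real.exp 1) :
    Summable (fun n : ℕ =>
      |(y + (n : ℝ)) ^ ((n : ℤ) + m)| * ((n : ℝ) * r ^ (n - 1)) / (n.factorial : ℝ)) := by
  have he : (0 : ℝ) < Real.exp 1 := Real.exp_pos 1
  set q : ℝ := r * Real.exp 1 with hq_def
  have hq0 : 0 < q := mul_pos hr0 he
  have hq1 : q < 1 := by
    have := (lt_div_iff₀ he).1 hre
    simpa [hq_def] using this
  set M : ℕ := m.toNat with hM_def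
  set A : ℝ := (y + 1) ^ M + y ^ m with hA_def
  have hA0 : 0 < A := by
    have h1 : (0:ℝ) < (y + 1) ^ M := by positivity
    have h2 : (0:ℝ) < y ^ m := zpow_pos hy m
    linarith
  set C : ℝ := Real.exp y * A / r with hC_def
  have hypos : ∀ n : ℕ, (0:ℝ) < y + n := fun n => by positivity
  -- the polynomial bound on the zpow factor
  have hbound : ∀ n : ℕ, (y + (n : ℝ)) ^ m ≤ A * (1 + (n : ℝ)) ^ M := by
    intro n
    have hn0 : (0:ℝ) ≤ (n : ℝ) := n.cast_nonneg
    rcases le_or_gt 0 m with hm | hm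
    · have hMm : ((M : ℤ)) = m := Int.toNat_of_nonneg hm
      rw [← hMm, zpow_natCast]
      have h1 : y + (n:ℝ) ≤ (y + 1) * (1 + n) := by nlinarith
      calc (y + (n:ℝ)) ^ M ≤ ((y + 1) * (1 + n)) ^ M :=
            pow_le_pow_left₀ (by positivity) h1 M
        _ = (y + 1) ^ M * (1 + (n:ℝ)) ^ M := mul_pow _ _ _
        _ ≤ A * (1 + (n:ℝ)) ^ M := by
            have h2 : (0:ℝ) < y ^ m := zpow_pos hy m
            have : (y + 1) ^ M ≤ A := by rw [hA_def]; linarith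
            exact mul_le_mul_of_nonneg_right this (by positivity)
    · have hM0 : M = 0 := by rw [hM_def]; omega
      rw [hM0, pow_zero, mul_one]
      set t : ℕ := (-m).toNat with ht_def
      have htt : m = -(t : ℤ) := by rw [ht_def]; omega
      have hstep : (y + (n:ℝ)) ^ m ≤ y ^ m := by
        rw [htt, zpow_neg, zpow_neg, zpow_natCast, zpow_natCast]
        exact inv_anti₀ (pow_pos hy t) (pow_le_pow_left₀ hy.le (by linarith) t)
      have : y ^ m ≤ A := by
        rw [hA_def, hM0, pow_zero]
        linarith
      linarith
  -- summability of the polynomial × geometric majorant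
  have hg1 : Summable (fun n : ℕ => (n : ℝ) ^ (M + 1) * q ^ n) :=
    summable_pow_mul_geometric_of_norm_lt_one (M + 1)
      (by rw [Real.norm_eq_abs, abs_of_pos hq0]; exact hq1)
  have hg2 : Summable (fun n : ℕ => (1 + (n : ℝ)) ^ (M + 1) * q ^ n) := by
    have h1 : Summable (fun n : ℕ => ((n + 1 : ℕ) : ℝ) ^ (M + 1) * q ^ (n + 1)) :=
      (summable_nat_add_iff 1).2 hg1
    refine (h1.mul_left q⁻¹).congr fun n => ?_
    push_cast
    rw [pow_succ]
    field_simp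
    ring
  refine Summable.of_nonneg_of_le (fun n => by positivity) (fun n => ?_)
    (hg2.mul_left C)
  -- the pointwise bound
  have hfact : (0:ℝ) < (n.factorial : ℝ) := by positivity
  have habs : |(y + (n : ℝ)) ^ ((n : ℤ) + m)| = (y + (n:ℝ)) ^ ((n : ℤ) + m) :=
    abs_of_pos (zpow_pos (hypos n) _)
  have hsplit : (y + (n:ℝ)) ^ ((n : ℤ) + m) = (y + (n:ℝ)) ^ n * (y + (n:ℝ)) ^ m := by
    rw [zpow_add₀ (hypos n).ne', zpow_natCast]
  have h1 : (y + (n:ℝ)) ^ n ≤ Real.exp y * Real.exp 1 ^ n * (n.factorial : ℝ) := by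
    have := Real.pow_div_factorial_le_exp (x := y + (n:ℝ)) (hypos n).le n
    rw [div_le_iff₀ hfact] at this
    calc (y + (n:ℝ)) ^ n ≤ Real.exp (y + n) * (n.factorial : ℝ) := this
      _ = Real.exp y * Real.exp 1 ^ n * (n.factorial : ℝ) := by
          rw [Real.exp_add, Real.exp_one_pow]
  have hkey : |(y + (n : ℝ)) ^ ((n : ℤ) + m)| ≤
      (Real.exp y * A * (1 + (n:ℝ)) ^ M) * (Real.exp 1 ^ n * (n.factorial : ℝ)) := by
    rw [habs, hsplit]
    calc (y + (n:ℝ)) ^ n * (y + (n:ℝ)) ^ m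
        ≤ (Real.exp y * Real.exp 1 ^ n * (n.factorial : ℝ)) * (A * (1 + (n:ℝ)) ^ M) :=
          mul_le_mul h1 (hbound n) (zpow_pos (hypos n) m).le (by positivity)
      _ = (Real.exp y * A * (1 + (n:ℝ)) ^ M) * (Real.exp 1 ^ n * (n.factorial : ℝ)) := by
          ring
  have hr1 : (n:ℝ) * r ^ (n - 1) ≤ (1 + (n:ℝ)) * (r ^ n / r) := by
    cases n with
    | zero => simp; positivity
    | succ j =>
      have hpow : r ^ (j + 1) / r = r ^ j := by
        rw [pow_succ]; field_simp
      simp only [Nat.add_sub_cancel, hpow]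
      have hrj : (0:ℝ) ≤ r ^ j := by positivity
      push_cast
      nlinarith [Nat.cast_nonneg (α := ℝ) j]
  calc |(y + (n : ℝ)) ^ ((n : ℤ) + m)| * ((n : ℝ) * r ^ (n - 1)) / (n.factorial : ℝ)
      ≤ ((Real.exp y * A * (1 + (n:ℝ)) ^ M) * (Real.exp 1 ^ n * (n.factorial : ℝ))) *
          ((1 + (n:ℝ)) * (r ^ n / r)) / (n.factorial : ℝ) := by
        gcongr
    _ = C * ((1 + (n:ℝ)) ^ (M + 1) * q ^ n) := by
        rw [hC_def, hq_def, mul_pow, pow_succ]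
        field_simp

set_option maxHeartbeats 1000000 in
/-- Relation (1k) for the Kolberg quatuor: with
`f_k(x) = x^y · Σ_{n=0}^∞ (y+n)^{n−k} xⁿ/n!`, for every `x ∈ (0, 1/e)` the function
`f_{k+1}` is differentiable at `x` with derivative `f_k(x)/x`, i.e. `x·f_{k+1}′(x) = f_k(x)`. -/
theorem kolberg_quatuor_relation_1k (k : ℤ) (y : ℝ) (hy : 0 < y) :
    ∀ x ∈ Set.Ioo (0 : ℝ) (1 / Real.exp 1),
      HasDerivAt
        (fun z : ℝ => Real.rpow z y *
          ∑' n : ℕ, ((y + (n : ℝ)) ^ ((n : ℤ) - (k + 1))) * z ^ n / (n.factorial : ℝ))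
        ((Real.rpow x y *
          ∑' n : ℕ, ((y + (n : ℝ)) ^ ((n : ℤ) - k)) * x ^ n / (n.factorial : ℝ)) / x)
        x := by
  rintro x ⟨hx0, hxe⟩
  have he : (0 : ℝ) < Real.exp 1 := Real.exp_pos 1
  set r : ℝ := (x + 1 / Real.exp 1) / 2 with hr_def
  have hxr : x < r := by rw [hr_def]; linarith
  have hr0 : 0 < r := hx0.trans hxr
  have hre : r < 1 / Real.exp 1 := by rw [hr_def]; linarith
  set c : ℕ → ℝ := fun n => (y + (n : ℝ)) ^ ((n : ℤ) - (k + 1)) with hc_def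
  have hypos : ∀ n : ℕ, (0:ℝ) < y + n := fun n => by positivity
  set u : ℕ → ℝ := fun n =>
    |(y + (n : ℝ)) ^ ((n : ℤ) + (-(k + 1)))| * ((n : ℝ) * r ^ (n - 1)) / (n.factorial : ℝ)
    with hu_def
  have hu_sum : Summable u := kolberg_aux_summable (-(k+1)) y r hy hr0 hre
  have hcu : ∀ n : ℕ, c n = (y + (n : ℝ)) ^ ((n : ℤ) + (-(k + 1))) := by
    intro n
    simp only [hc_def, sub_eq_add_neg]
  -- derivatives of the terms
  have hgderiv : ∀ (n : ℕ) (z : ℝ), z ∈ Ioo (-r) r →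
      HasDerivAt (fun w : ℝ => c n * w ^ n / (n.factorial : ℝ))
        (c n * ((n : ℝ) * z ^ (n - 1)) / (n.factorial : ℝ)) z :=
    fun n z _ => ((hasDerivAt_pow n z).const_mul (c n)).div_const _
  -- bound on the derivatives
  have hgbound : ∀ (n : ℕ) (z : ℝ), z ∈ Ioo (-r) r →
      ‖c n * ((n : ℝ) * z ^ (n - 1)) / (n.factorial : ℝ)‖ ≤ u n := by
    rintro n z ⟨hz1, hz2⟩
    have hza : |z| ≤ r := (abs_lt.2 ⟨hz1, hz2⟩).le
    have hu_eq : u n = |(y + (n : ℝ)) ^ ((n : ℤ) + (-(k + 1)))| *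
        ((n : ℝ) * r ^ (n - 1)) / (n.factorial : ℝ) := by simp only [hu_def]
    rw [hu_eq, hcu n, Real.norm_eq_abs, abs_div, abs_mul, abs_mul,
      Nat.abs_cast, abs_pow,
      abs_of_nonneg (Nat.cast_nonneg n.factorial : (0:ℝ) ≤ (n.factorial : ℝ))]
    gcongr
  have h0mem : (0:ℝ) ∈ Ioo (-r) r := ⟨by linarith, hr0⟩
  have hxmem : x ∈ Ioo (-r) r := ⟨by linarith, hxr⟩
  have h0sum : Summable (fun n => c n * (0:ℝ) ^ n / (n.factorial : ℝ)) := by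
    apply summable_of_ne_finset_zero (s := {0})
    intro n hn
    have : n ≠ 0 := by simpa using hn
    simp [zero_pow this]
  -- differentiate the power series
  have hS : HasDerivAt (fun z : ℝ => ∑' n : ℕ, c n * z ^ n / (n.factorial : ℝ))
      (∑' n : ℕ, c n * ((n : ℝ) * x ^ (n - 1)) / (n.factorial : ℝ)) x :=
    hasDerivAt_tsum_of_isPreconnected hu_sum isOpen_Ioo
      (convex_Ioo _ _).isPreconnected hgderiv hgbound h0mem h0sum hxmem
  have hsum_g : Summable (fun n : ℕ => c n * x ^ n / (n.factorial : ℝ)) :=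
    summable_of_summable_hasDerivAt_of_isPreconnected hu_sum isOpen_Ioo
      (convex_Ioo _ _).isPreconnected hgderiv hgbound h0mem h0sum hxmem
  have hsum_g' : Summable (fun n : ℕ => c n * ((n : ℝ) * x ^ (n - 1)) / (n.factorial : ℝ)) :=
    Summable.of_norm_bounded hu_sum (fun n => hgbound n x hxmem)
  -- the rpow factor
  have hrpow : HasDerivAt (fun z : ℝ => Real.rpow z y) (y * Real.rpow x (y - 1)) x :=
    Real.hasDerivAt_rpow_const (p := y) (Or.inl hx0.ne')
  have hmul := hrpow.mul hS
  convert hmul using 1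
  · rfl
  · rfl
  · rfl
  -- identify the derivative value
  set S : ℝ := ∑' n : ℕ, c n * x ^ n / (n.factorial : ℝ) with hS_def
  set T : ℝ := ∑' n : ℕ, c n * ((n : ℝ) * x ^ (n - 1)) / (n.factorial : ℝ) with hT_def
  have hterm : ∀ n : ℕ, ((y + (n : ℝ)) ^ ((n : ℤ) - k)) * x ^ n / (n.factorial : ℝ) =
      y * (c n * x ^ n / (n.factorial : ℝ)) +
        x * (c n * ((n : ℝ) * x ^ (n - 1)) / (n.factorial : ℝ)) := by
    intro n
    have hzz : (y + (n : ℝ)) ^ ((n : ℤ) - k) = c n * (y + n) := by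
      rw [hc_def, show (n : ℤ) - k = ((n : ℤ) - (k + 1)) + 1 by ring,
        zpow_add_one₀ (hypos n).ne']
    rw [hzz]
    match n with
    | 0 => simp; ring
    | (j + 1) =>
      have hfact : ((j+1).factorial : ℝ) ≠ 0 := by positivity
      simp only [Nat.add_sub_cancel]
      field_simp
      push_cast
      ring
  have htsum : (∑' n : ℕ, ((y + (n : ℝ)) ^ ((n : ℤ) - k)) * x ^ n / (n.factorial : ℝ)) =
      y * S + x * T := by
    rw [tsum_congr hterm, Summable.tsum_add (hsum_g.mul_left y) (hsum_g'.mul_left x),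
      tsum_mul_left, tsum_mul_left]
  rw [htsum]
  have hx1 : Real.rpow x (y - 1) = Real.rpow x y / x := Real.rpow_sub_one hx0.ne' y
  rw [hx1]
  field_simp
end

section
/- Let y be a nonzero real number and let t be any real number. Then (1 + 2/y + t²) · e^{yt} = (y + 2)/y + Σ_{n=1}^∞ (y² + 2y + n(n−1)) · y^{n−2} · tⁿ / n!, where y^{n−2} denotes the integer power zpow with exponent n − 2 ∈ ℤ, and the series on the right is absolutely convergent. -/
/-- Power series expansion of the generating function of the paper's illustration:
for `y ≠ 0` and any real `t`,
`(1 + 2/y + t²)·e^{yt} = (y+2)/y + Σ_{n=1}^∞ (y² + 2y + n(n−1)) y^{n−2} tⁿ/n!`,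
the series being absolutely convergent. -/
theorem generating_function_expansion (y : ℝ) (hy : y ≠ 0) (t : ℝ) :
    Summable (fun n : ℕ =>
      (y ^ 2 + 2 * y + ((n : ℝ) + 1) * (((n : ℝ) + 1) - 1)) * (y ^ ((n : ℤ) + 1 - 2))
        * t ^ (n + 1) / ((n + 1).factorial : ℝ)) ∧
    (1 + 2 / y + t ^ 2) * Real.exp (y * t) =
      (y + 2) / y + ∑' n : ℕ,
        (y ^ 2 + 2 * y + ((n : ℝ) + 1) * (((n : ℝ) + 1) - 1)) * (y ^ ((n : ℤ) + 1 - 2))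
          * t ^ (n + 1) / ((n + 1).factorial : ℝ) := by
  set x := y * t with hx
  -- exp as tsum
  have hexp : Real.exp x = ∑' n : ℕ, x ^ n / n.factorial := by
    rw [Real.exp_eq_exp_ℝ, NormedSpace.exp_eq_tsum_div]
  set f : ℕ → ℝ := fun n =>
    (y ^ 2 + 2 * y + ((n : ℝ) + 1) * (((n : ℝ) + 1) - 1)) * (y ^ ((n : ℤ) + 1 - 2))
      * t ^ (n + 1) / ((n + 1).factorial : ℝ) with hf
  set a : ℕ → ℝ := fun n => (1 + 2 / y) * (x ^ (n + 1) / (n + 1).factorial) with ha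
  set b : ℕ → ℝ := fun n =>
    ((n : ℝ) + 1) * (n : ℝ) * (y ^ ((n : ℤ) - 1)) * t ^ (n + 1) / ((n + 1).factorial : ℝ)
    with hb
  have hzpow : ∀ n : ℕ, y ^ ((n : ℤ) - 1) = y ^ n / y := by
    intro n
    rw [zpow_sub₀ hy, zpow_natCast, zpow_one]
  have hfab : ∀ n, f n = a n + b n := by
    intro n
    simp only [hf, ha, hb, hx]
    have h1 : ((n : ℤ) + 1 - 2) = (n : ℤ) - 1 := by ring
    rw [h1, hzpow n]
    have hfac : ((n + 1).factorial : ℝ) ≠ 0 := by positivity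
    field_simp
    ring
  have hsa : Summable a := by
    apply Summable.mul_left
    exact (Real.summable_pow_div_factorial x).comp_injective Nat.succ_injective
  have hb0 : b 0 = 0 := by simp [hb]
  have hbs : ∀ n : ℕ, b (n + 1) = t ^ 2 * (x ^ n / n.factorial) := by
    intro n
    simp only [hb, hx]
    have h1 : ((n : ℕ) + 1 : ℤ) - 1 = (n : ℤ) := by push_cast; ring
    have h2 : ((n : ℤ) + 1 - 1) = (n : ℤ) := by ring
    rw [show (((n + 1 : ℕ) : ℤ) - 1) = (n : ℤ) by push_cast; ring, zpow_natCast]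
    have hfac : ((n + 1 + 1).factorial : ℝ) = ((n : ℝ) + 2) * ((n : ℝ) + 1) * n.factorial := by
      rw [Nat.factorial_succ, Nat.factorial_succ]
      push_cast; ring
    have hfn : (n.factorial : ℝ) ≠ 0 := by positivity
    rw [hfac]
    push_cast
    field_simp
    ring
  have hsb : Summable b := by
    rw [← summable_nat_add_iff 1]
    have : (fun n => b (n + 1)) = fun n => t ^ 2 * (x ^ n / n.factorial) := funext hbs
    rw [this]
    exact (Real.summable_pow_div_factorial x).mul_left _
  have hsf : Summable f := by
    have : f = fun n => a n + b n := funext hfab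
    rw [this]; exact hsa.add hsb
  refine ⟨hsf, ?_⟩
  have htsum : ∑' n, f n = (∑' n, a n) + ∑' n, b n := by
    rw [show f = fun n => a n + b n from funext hfab]
    exact Summable.tsum_add hsa hsb
  -- compute tsum a
  have hshift : Summable (fun n : ℕ => x ^ (n + 1) / (n + 1).factorial) :=
    (Real.summable_pow_div_factorial x).comp_injective Nat.succ_injective
  have hexp0 : ∑' n : ℕ, x ^ n / n.factorial
      = x ^ 0 / (0 : ℕ).factorial + ∑' n : ℕ, x ^ (n + 1) / (n + 1).factorial :=
    Summable.tsum_eq_zero_add (Real.summable_pow_div_factorial x)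
  have hta : ∑' n, a n = (1 + 2 / y) * (Real.exp x - 1) := by
    rw [ha, tsum_mul_left, hexp]
    rw [hexp0]
    simp
  have htb : ∑' n, b n = t ^ 2 * Real.exp x := by
    rw [Summable.tsum_eq_zero_add hsb, hb0]
    have : (fun n => b (n + 1)) = fun n => t ^ 2 * (x ^ n / n.factorial) := funext hbs
    rw [this, tsum_mul_left, ← hexp]
    ring
  rw [htsum, hta, htb]
  have : (y + 2) / y = 1 + 2 / y := by field_simp
  rw [this]
  ring
end

section
/- For every integer n ≥ 3, the following identity holds in the polynomial ring ℤ[Y]: Σ_{m=1}^n C(n−1, m−1) · n^{n−m} · (Y² + 2Y + m(m−1)) · Y^{m−1} = Y · (Y + 2) · (Y² + 2nY + 2n² − n) · (Y + n)^{n−3}, where C(n−1, m−1) denotes the binomial coefficient. -/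
open Polynomial

lemma myL0 (N : ℕ) (c : ℤ) :
    ∑ i ∈ Finset.range (N + 1), C ((N.choose i : ℤ)) * C (c ^ (N - i)) * X ^ i
      = (X + C c) ^ N := by
  rw [add_pow]
  apply Finset.sum_congr rfl
  intro i hi
  simp only [map_pow, C_eq_natCast]
  ring

lemma myL1 (N : ℕ) (c : ℤ) :
    ∑ i ∈ Finset.range (N + 2), C (((N + 1).choose i : ℤ) * i) * C (c ^ (N + 1 - i)) * X ^ i
      = C ((N : ℤ) + 1) * X * (X + C c) ^ N := by
  rw [Finset.sum_range_succ']
  have h0 : C (((N + 1).choose 0 : ℤ) * (0:ℕ)) * C (c ^ (N + 1 - 0)) * X ^ (0:ℕ) = 0 := by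
    simp
  rw [h0, add_zero]
  have h : ∀ i : ℕ, (((N + 1).choose (i + 1) : ℤ) * ((i : ℤ) + 1)) = ((N : ℤ) + 1) * (N.choose i : ℤ) := by
    intro i
    have := Nat.add_one_mul_choose_eq N i
    exact_mod_cast this.symm
  rw [← myL0 N c, Finset.mul_sum]
  apply Finset.sum_congr rfl
  intro i hi
  have : ((i:ℕ) + 1 : ℤ) = ((i:ℤ) + 1) := by push_cast; ring
  rw [show (((i:ℕ) + 1 : ℕ) : ℤ) = (i:ℤ) + 1 by push_cast; ring, h i,
    Nat.succ_sub_succ, map_mul]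
  ring

lemma myL2 (N : ℕ) (c : ℤ) :
    ∑ i ∈ Finset.range (N + 3), C (((N + 2).choose i : ℤ) * ((i : ℤ) * ((i : ℤ) - 1))) * C (c ^ (N + 2 - i)) * X ^ i
      = C (((N : ℤ) + 2) * ((N : ℤ) + 1)) * X ^ 2 * (X + C c) ^ N := by
  rw [Finset.sum_range_succ']
  have h0 : C (((N + 2).choose 0 : ℤ) * (((0:ℕ) : ℤ) * (((0:ℕ):ℤ) - 1))) * C (c ^ (N + 2 - 0)) * X ^ (0:ℕ) = 0 := by
    simp
  rw [h0, add_zero]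
  have h : ∀ i : ℕ, (((N + 2).choose (i + 1) : ℤ) * (((i:ℤ) + 1) * (i:ℤ))) = ((N : ℤ) + 2) * (((N + 1).choose i : ℤ) * i) := by
    intro i
    have := Nat.add_one_mul_choose_eq (N + 1) i
    have h2 : ((N + 2).choose (i + 1) : ℤ) * ((i:ℤ) + 1) = ((N:ℤ) + 2) * ((N+1).choose i : ℤ) := by
      exact_mod_cast this.symm
    calc ((N + 2).choose (i + 1) : ℤ) * (((i:ℤ) + 1) * (i:ℤ))
        = (((N + 2).choose (i + 1) : ℤ) * ((i:ℤ) + 1)) * (i:ℤ) := by ring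
      _ = ((N:ℤ) + 2) * (((N + 1).choose i : ℤ) * i) := by rw [h2]; ring
  have hr : C (((N:ℤ) + 2) * ((N:ℤ) + 1)) * X ^ 2 * (X + C c) ^ N
      = C ((N:ℤ) + 2) * X * (C ((N:ℤ) + 1) * X * (X + C c) ^ N) := by
    rw [map_mul]; ring
  rw [hr, ← myL1 N c, Finset.mul_sum]
  apply Finset.sum_congr rfl
  intro i hi
  rw [show (((i:ℕ) + 1 : ℕ) : ℤ) = (i:ℤ) + 1 by push_cast; ring]
  rw [show ((i:ℤ) + 1 - 1) = (i:ℤ) by ring, h i, Nat.succ_sub_succ, map_mul]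
  ring

/-- For every integer `n ≥ 3`, the identity in `ℤ[Y]`:
`Σ_{m=1}^n C(n−1,m−1) n^{n−m} (Y² + 2Y + m(m−1)) Y^{m−1}
  = Y (Y+2) (Y² + 2nY + 2n² − n) (Y+n)^{n−3}`. -/
theorem illustration_polynomial_identity (n : ℕ) (hn : 3 ≤ n) :
    ∑ m ∈ Finset.Icc 1 n,
        C (((n - 1).choose (m - 1) : ℤ)) * C ((n : ℤ) ^ (n - m)) *
          (X ^ 2 + 2 * X + C ((m : ℤ) * ((m : ℤ) - 1))) * X ^ (m - 1) =
      X * (X + 2) * (X ^ 2 + C (2 * (n : ℤ)) * X + C (2 * (n : ℤ) ^ 2 - (n : ℤ))) *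
        (X + C (n : ℤ)) ^ (n - 3) := by
  obtain ⟨K, rfl⟩ : ∃ K, n = K + 3 := ⟨n - 3, by omega⟩
  rw [← Finset.Ico_add_one_right_eq_Icc, Finset.sum_Ico_eq_sum_range]
  simp only [show K + 3 + 1 - 1 = K + 3 from rfl]
  set c : ℤ := ((K:ℤ) + 3) with hc
  have hcast : ((K + 3 : ℕ) : ℤ) = c := by simp [hc]
  -- rewrite each summand into four parts
  have key : ∀ i ∈ Finset.range (K + 3),
      C ((((K+3) - 1).choose ((1 + i) - 1) : ℤ)) * C (((K+3 : ℕ) : ℤ) ^ ((K+3) - (1 + i))) *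
          (X ^ 2 + 2 * X + C (((1 + i : ℕ) : ℤ) * (((1 + i : ℕ) : ℤ) - 1))) * X ^ ((1 + i) - 1)
        = C (((K+2).choose i : ℤ)) * C (c ^ ((K+2) - i)) * X ^ i * X ^ 2
          + C (((K+2).choose i : ℤ)) * C (c ^ ((K+2) - i)) * X ^ i * (2 * X)
          + C (((K+2).choose i : ℤ) * ((i:ℤ) * ((i:ℤ) - 1))) * C (c ^ ((K+2) - i)) * X ^ i
          + C (((K+2).choose i : ℤ) * (i:ℤ)) * C (c ^ ((K+1) + 1 - i)) * X ^ i * 2 := by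
    intro i hi
    have e1 : (K + 3) - 1 = K + 2 := by omega
    have e2 : (1 + i) - 1 = i := by omega
    have e3 : (K + 3) - (1 + i) = (K + 2) - i := by omega
    have e4 : (K + 1) + 1 - i = (K + 2) - i := rfl
    rw [e1, e2, e3, e4, hcast]
    have e5 : (((1 + i : ℕ) : ℤ)) = (i:ℤ) + 1 := by push_cast; ring
    rw [e5]
    have e6 : ((i:ℤ) + 1) * (((i:ℤ) + 1) - 1) = (i:ℤ) * ((i:ℤ) - 1) + 2 * (i:ℤ) := by ring
    rw [e6]
    simp only [map_add, map_mul, map_sub, map_one, map_ofNat]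
    ring
  rw [Finset.sum_congr rfl key]
  rw [Finset.sum_add_distrib, Finset.sum_add_distrib, Finset.sum_add_distrib,
    ← Finset.sum_mul, ← Finset.sum_mul, ← Finset.sum_mul]
  rw [show K + 3 = (K + 2) + 1 from rfl] -- for myL0 range
  rw [myL0 (K+2) c]
  rw [show (K + 2) + 1 = (K + 1) + 2 from rfl]
  rw [myL1 (K+1) c]
  rw [show (K + 1) + 2 = K + 3 from rfl]
  rw [myL2 K c]
  have hp1 : (X + C c) ^ (K + 2) = (X + C c) ^ K * (X + C c) ^ 2 := by
    rw [← pow_add]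
  have hp2 : (X + C c) ^ (K + 1) = (X + C c) ^ K * (X + C c) := by
    rw [pow_succ]
  rw [hp1, hp2, hc]
  push_cast
  simp only [map_add, map_mul, map_sub, map_pow, map_ofNat, C_1, map_one]
  ring
end
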